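/- For γ ∈ (0,1) and integers 1 ≤ k ≤ R ≤ Q, the normalized expected latency μ·E[L_k] = (Σ_{i=0}^{k-1} 1/(R−i))/(1 − γR/Q) satisfies μ·E[L_k] ≥ (Σ_{i=0}^{k-1} 1/(Q−i))/(1−γ) when R = Q, and the choice R = Q is optimal in the limit γ → 0⁺ (i.e., for every R < Q there exists γ₀ > 0 such that for all γ < γ₀ the value at R = Q is strictly smaller than at R). -/

import Mathlib

open Set

/-- Let `μ·E[L_k](R,γ) = (Σ_{i=0}^{k-1} 1/(R−i))/(1 − γR/Q)` be the normalized expected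
`k`-OutOf-`Q` latency with replication factor `R` and load `γ ∈ (0,1)`. At `R = Q` the
normalized latency is at least `(Σ_{i=0}^{k-1} 1/(Q−i))/(1−γ)`, and the choice `R = Q`
is optimal in the limit `γ → 0⁺`: for every `R < Q` (with `k ≤ R`) there exists
`γ₀ > 0` such that for all `0 < γ < γ₀` the latency at `R = Q` is strictly smaller than
at `R`. -/
theorem full_replication_optimal_at_low_load (k Q : ℕ) (hk : 1 ≤ k) (hkQ : k ≤ Q) :
    let g : ℕ → ℝ → ℝ := fun R γ =>
      (∑ i ∈ Finset.range k, 1 / ((R : ℝ) - i)) / (1 - γ * R / Q)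
    (∀ γ ∈ Ioo (0 : ℝ) 1,
        g Q γ ≥ (∑ i ∈ Finset.range k, 1 / ((Q : ℝ) - i)) / (1 - γ)) ∧
      ∀ R : ℕ, k ≤ R → R < Q →
        ∃ γ₀ > (0 : ℝ), ∀ γ : ℝ, 0 < γ → γ < γ₀ → g Q γ < g R γ := by
  intro g
  have hQnat : 0 < Q := lt_of_lt_of_le hk hkQ
  have hQ0 : (0:ℝ) < (Q:ℝ) := by exact_mod_cast hQnat
  have hgQ : ∀ γ : ℝ, g Q γ = (∑ i ∈ Finset.range k, 1 / ((Q : ℝ) - i)) / (1 - γ) := by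
    intro γ
    simp only [g]
    rw [mul_div_assoc, div_self hQ0.ne', mul_one]
  constructor
  · intro γ _
    exact (hgQ γ).ge
  · intro R hkR hRQ
    -- sums
    set SQ := ∑ i ∈ Finset.range k, 1 / ((Q : ℝ) - i) with hSQ
    set SR := ∑ i ∈ Finset.range k, 1 / ((R : ℝ) - i) with hSR
    have hterm : ∀ i ∈ Finset.range k, (0:ℝ) < (R:ℝ) - i := by
      intro i hi
      have : i < R := lt_of_lt_of_le (Finset.mem_range.mp hi) hkR
      have : (i:ℝ) < (R:ℝ) := by exact_mod_cast this
      linarith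
    have htermQ : ∀ i ∈ Finset.range k, (0:ℝ) < (Q:ℝ) - i := by
      intro i hi
      have : i < Q := lt_of_lt_of_le (Finset.mem_range.mp hi) hkQ
      have : (i:ℝ) < (Q:ℝ) := by exact_mod_cast this
      linarith
    have hSRpos : 0 < SR := by
      apply Finset.sum_pos
      · intro i hi
        exact div_pos one_pos (hterm i hi)
      · exact Finset.nonempty_range_iff.mpr (by omega)
    have hSQpos : 0 < SQ := by
      apply Finset.sum_pos
      · intro i hi
        exact div_pos one_pos (htermQ i hi)
      · exact Finset.nonempty_range_iff.mpr (by omega)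
    have hRQ' : (R:ℝ) < (Q:ℝ) := by exact_mod_cast hRQ
    have hlt : SQ < SR := by
      apply Finset.sum_lt_sum_of_nonempty (Finset.nonempty_range_iff.mpr (by omega))
      intro i hi
      apply one_div_lt_one_div_of_lt (hterm i hi)
      linarith
    refine ⟨1 - SQ / SR, by
      have : SQ / SR < 1 := (div_lt_one hSRpos).mpr hlt
      linarith, ?_⟩
    intro γ hγ0 hγ
    have hγ1 : γ < 1 := by
      have h1 : 0 < SQ / SR := div_pos hSQpos hSRpos
      linarith
    have hden1 : (0:ℝ) < 1 - γ := by linarith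
    -- g Q γ < SR
    have h1 : g Q γ < SR := by
      rw [hgQ γ]
      rw [div_lt_iff₀ hden1]
      have : SQ / SR < 1 - γ := by linarith
      calc SQ = SR * (SQ / SR) := by field_simp
        _ < SR * (1 - γ) := by exact (mul_lt_mul_iff_right₀ hSRpos).mpr this
    -- SR ≤ g R γ
    have hRpos : (0:ℝ) < (R:ℝ) := by
      have : 0 < R := lt_of_lt_of_le hk hkR
      exact_mod_cast this
    have hfrac : 0 < γ * R / Q := by positivity
    have hfrac1 : γ * R / Q < 1 := by
      rw [div_lt_one hQ0]
      calc γ * R < 1 * R := by exact (mul_lt_mul_iff_left₀ hRpos).mpr hγ1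
        _ = R := one_mul _
        _ < Q := hRQ'
    have hden2 : (0:ℝ) < 1 - γ * R / Q := by linarith
    have h2 : SR ≤ g R γ := by
      simp only [g]
      rw [le_div_iff₀ hden2]
      nlinarith
    exact lt_of_lt_of_le h1 h2
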